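/- arXiv:math/0406048 — 7 statements merged into one kernel-verified Lean document; each statement's English description precedes it below -/
import Mathlib

section
/- For pure imaginary quaternions M and N with Re(M N*) = 0 (i.e., M ⊥ N with respect to the inner product ⟨x,y⟩ = Re(x y*)), the commutator of their exponentials satisfies exp(M) * exp(N) - exp(N) * exp(M) = 2 * (sin |M| / |M|) * (sin |N| / |N|) * (M * N), provided M ≠ 0 and N ≠ 0. -/
open Quaternion NormedSpace

theorem commutator_exp_of_orthogonal (M N : ℍ[ℝ])
    (hM : M.re = 0) (hN : N.re = 0) (horth : (M * star N).re = 0)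
    (hM0 : M ≠ 0) (hN0 : N ≠ 0) :
    exp M * exp N - exp N * exp M =
      (2 * (Real.sin ‖M‖ / ‖M‖) * (Real.sin ‖N‖ / ‖N‖)) • (M * N) := by
  have horth' : M.imI * N.imI + M.imJ * N.imJ + M.imK * N.imK = 0 := by
    simp [Quaternion.re_mul, hM, hN] at horth
    linarith
  have hNM : N * M = -(M * N) := by
    ext <;> simp [Quaternion.re_mul, Quaternion.imI_mul, Quaternion.imJ_mul,
      Quaternion.imK_mul, hM, hN] <;> ring_nf <;> linarith
  rw [Quaternion.exp_of_re_eq_zero M hM, Quaternion.exp_of_re_eq_zero N hN]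
  have hc : ((Real.cos ‖N‖ : ℝ) : ℍ[ℝ]) * ((Real.cos ‖M‖ : ℝ) : ℍ[ℝ]) =
      ((Real.cos ‖M‖ : ℝ) : ℍ[ℝ]) * ((Real.cos ‖N‖ : ℝ) : ℍ[ℝ]) := by
    norm_cast; ring_nf
  simp only [add_mul, mul_add]
  rw [hc]
  simp only [Quaternion.coe_mul_eq_smul, Quaternion.mul_coe_eq_smul,
    smul_mul_assoc, mul_smul_comm, hNM, smul_neg, smul_smul]
  have h1 : ‖M‖ ≠ 0 := norm_ne_zero_iff.mpr hM0
  have h2 : ‖N‖ ≠ 0 := norm_ne_zero_iff.mpr hN0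
  match_scalars <;> field_simp <;> ring
end

section
/- For pure imaginary quaternions M and N with ⟨M, N⟩ = Re(M N*) = 0, M ≠ 0, N ≠ 0, the commutator [exp M, exp N] = 0 if and only if sin |M| = 0 or sin |N| = 0 or M * N = 0. -/
open Quaternion NormedSpace

theorem commutator_exp_eq_zero_iff (M N : ℍ[ℝ])
    (hM : M.re = 0) (hN : N.re = 0) (horth : (M * star N).re = 0)
    (hM0 : M ≠ 0) (hN0 : N ≠ 0) :
    exp M * exp N - exp N * exp M = 0 ↔
      Real.sin ‖M‖ = 0 ∨ Real.sin ‖N‖ = 0 ∨ M * N = 0 := by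
  have hanti : N * M = -(M * N) := by
    simp [Quaternion.re_mul, Quaternion.re_star, Quaternion.imI_star, Quaternion.imJ_star,
      Quaternion.imK_star, hM, hN] at horth
    ext <;>
      simp [Quaternion.re_mul, Quaternion.imI_mul, Quaternion.imJ_mul, Quaternion.imK_mul,
        hM, hN] <;> linarith
  set a := Real.sin ‖M‖ / ‖M‖ with ha
  set b := Real.sin ‖N‖ / ‖N‖ with hb
  have hexpM : exp M = ↑(Real.cos ‖M‖) + a • M := exp_of_re_eq_zero M hM
  have hexpN : exp N = ↑(Real.cos ‖N‖) + b • N := exp_of_re_eq_zero N hN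
  have key : exp M * exp N - exp N * exp M = (2 * (a * b)) • (M * N) := by
    rw [hexpM, hexpN]
    have hc : ∀ r : ℝ, (r : ℍ[ℝ]) = r • (1 : ℍ[ℝ]) := fun r => by
      rw [← Quaternion.algebraMap_def, Algebra.algebraMap_eq_smul_one]
    simp only [add_mul, mul_add, mul_smul_comm, smul_mul_assoc, smul_smul, hc,
      one_mul, mul_one, hanti]
    module
  rw [key, smul_eq_zero]
  have hMn : ‖M‖ ≠ 0 := norm_ne_zero_iff.mpr hM0
  have hNn : ‖N‖ ≠ 0 := norm_ne_zero_iff.mpr hN0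
  constructor
  · rintro (h | h)
    · rcases mul_eq_zero.mp h with h | h
      · norm_num at h
      rcases mul_eq_zero.mp h with h | h
      · exact Or.inl (by rw [ha, div_eq_zero_iff] at h; simpa [hMn] using h)
      · exact Or.inr (Or.inl (by rw [hb, div_eq_zero_iff] at h; simpa [hNn] using h))
    · exact Or.inr (Or.inr h)
  · rintro (h | h | h)
    · exact Or.inl (by simp [ha, h])
    · exact Or.inl (by simp [hb, h])
    · exact Or.inr h
end

section
/- Let M and N be pure imaginary quaternions, and write N = N₁ + N₂ where N₁ = β • M for some real β and ⟨M, N₂⟩ = 0. If M ≠ 0 and N ≠ 0, then the anticommutator satisfies exp(M) * exp(N) + exp(N) * exp(M) = 2 * cos |M| * exp(N) + 2 * (sin |M| / |M|) * M * (cos |N| + (sin |N| / |N|) • N₁). -/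
open Quaternion NormedSpace

private lemma quat_coe_eq_smul_one (r : ℝ) : ((r : ℍ[ℝ])) = r • (1 : ℍ[ℝ]) := by
  rw [← Algebra.algebraMap_eq_smul_one]; rfl

theorem anticommutator_exp (M N N₁ N₂ : ℍ[ℝ]) (β : ℝ)
    (hM : M.re = 0) (hN : N.re = 0)
    (hsum : N = N₁ + N₂) (hN₁ : N₁ = β • M) (horth : (M * star N₂).re = 0)
    (hM0 : M ≠ 0) (hN0 : N ≠ 0) :
    NormedSpace.exp M * NormedSpace.exp N + NormedSpace.exp N * NormedSpace.exp M =
      (2 * Real.cos ‖M‖) • NormedSpace.exp N +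
        (2 * (Real.sin ‖M‖ / ‖M‖)) •
          (M * ((Real.cos ‖N‖ : ℍ[ℝ]) + (Real.sin ‖N‖ / ‖N‖) • N₁)) := by
  have hN₁re : N₁.re = 0 := by rw [hN₁]; simp [hM]
  have hN₂re : N₂.re = 0 := by
    have h : N₂ = N - N₁ := by rw [hsum]; abel
    rw [h]; simp [hN, hN₁re]
  have hstar2 : star N₂ = -N₂ := Quaternion.star_eq_neg.2 hN₂re
  have hre : (M * N₂).re = 0 := by
    rw [hstar2, mul_neg] at horth
    simp only [Quaternion.re_neg] at horth
    linarith
  have hanti : M * N₂ + N₂ * M = 0 := by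
    have h1 : N₂ * M = star (M * N₂) := by
      rw [star_mul, hstar2, Quaternion.star_eq_neg.2 hM, neg_mul_neg]
    rw [h1, Quaternion.self_add_star', hre]
    simp
  have hMN₂ : M * N₂ = -(N₂ * M) := eq_neg_of_add_eq_zero_left hanti
  have e : N * M = (2*β) • (M*M) - M * N := by
    rw [eq_sub_iff_add_eq, add_comm, hsum, hN₁]
    simp only [mul_add, add_mul, smul_mul_assoc, mul_smul_comm, hMN₂]
    rw [two_mul, add_smul]
    abel
  rw [exp_of_re_eq_zero M hM, exp_of_re_eq_zero N hN, hN₁]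
  simp only [mul_add, add_mul, smul_mul_assoc, mul_smul_comm, smul_smul,
    Quaternion.coe_mul_eq_smul, Quaternion.mul_coe_eq_smul, quat_coe_eq_smul_one, one_mul, mul_one, e, smul_sub, smul_add]
  module
end

section
/- Let M and N be pure imaginary quaternions with decomposition N = N₁ + N₂, N₁ = β • M (β ∈ ℝ), ⟨M, N₂⟩ = 0, M ≠ 0, N ≠ 0. Then exp(N) * exp(M) = cos |M| * exp(N) + (sin |M| / |M|) * M * exp(N₁ - N₂). -/
open Quaternion NormedSpace

theorem exp_mul_exp_decomposition (M N N₁ N₂ : ℍ[ℝ]) (β : ℝ)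
    (hM : M.re = 0) (hN : N.re = 0)
    (hsum : N = N₁ + N₂) (hN₁ : N₁ = β • M) (horth : (M * star N₂).re = 0)
    (hM0 : M ≠ 0) (hN0 : N ≠ 0) :
    NormedSpace.exp N * NormedSpace.exp M =
      (Real.cos ‖M‖) • NormedSpace.exp N +
        (Real.sin ‖M‖ / ‖M‖) • (M * NormedSpace.exp (N₁ - N₂)) := by
  have hN₁re : N₁.re = 0 := by simp [hN₁, hM]
  have hN₂re : N₂.re = 0 := by
    have := congrArg QuaternionAlgebra.re hsum
    simp [hN, hN₁re] at this
    linarith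
  -- anticommutation
  have hanti : M * N₂ = -(N₂ * M) := by
    have h2 : (M * N₂).re = 0 := by
      rw [Quaternion.re_mul] at horth ⊢
      simp [hM, hN₂re] at horth ⊢
      linarith
    ext
    · rw [Quaternion.re_mul] at h2
      simp only [Quaternion.re_neg, Quaternion.re_mul]
      simp [hM, hN₂re] at h2 ⊢
      linarith
    · simp [Quaternion.imI_mul, hM, hN₂re]; ring
    · simp [Quaternion.imJ_mul, hM, hN₂re]; ring
    · simp [Quaternion.imK_mul, hM, hN₂re]; ring
  have hinner : inner ℝ N₁ N₂ = (0 : ℝ) := by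
    simp [Quaternion.inner_def, hN₁, horth]
  have hnorm : ‖N₁ - N₂‖ = ‖N‖ := by
    have h1 : ‖N₁ - N₂‖ ^ 2 = ‖N₁ + N₂‖ ^ 2 := by
      rw [norm_sub_sq_real, norm_add_sq_real, hinner]
      ring
    rw [hsum, ← Real.sqrt_sq (norm_nonneg (N₁ - N₂)),
      ← Real.sqrt_sq (norm_nonneg (N₁ + N₂)), h1]
  have hkey : M * (N₁ - N₂) = N * M := by
    rw [hsum, hN₁, mul_sub, add_mul, hanti, sub_neg_eq_add, mul_smul_comm, smul_mul_assoc]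
  rw [exp_of_re_eq_zero M hM, exp_of_re_eq_zero N hN,
    exp_of_re_eq_zero (N₁ - N₂) (by simp [hN₁re, hN₂re]), hnorm]
  rw [mul_add M, mul_smul_comm, hkey]
  simp only [coe_mul_eq_smul, mul_coe_eq_smul, mul_add, add_mul, smul_add, mul_smul_comm,
    smul_mul_assoc, smul_smul]
  module
end

section
/- For pure imaginary quaternions N₁ and N₂ with ⟨N₁, N₂⟩ = 0 and N = N₁ + N₂ ≠ 0, one has exp(N) - exp(N₁ - N₂) = 2 * (sin |N| / |N|) • N₂ and |N₁ - N₂| = |N|. -/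
open Quaternion NormedSpace

theorem exp_sub_exp_of_orthogonal (N₁ N₂ : ℍ[ℝ])
    (h₁ : N₁.re = 0) (h₂ : N₂.re = 0) (horth : (N₁ * star N₂).re = 0)
    (hN : N₁ + N₂ ≠ 0) :
    exp (N₁ + N₂) - exp (N₁ - N₂) =
      (2 * (Real.sin ‖N₁ + N₂‖ / ‖N₁ + N₂‖)) • N₂ ∧
    ‖N₁ - N₂‖ = ‖N₁ + N₂‖ := by
  have hre : (N₁ * star N₂).re = N₁.imI * N₂.imI + N₁.imJ * N₂.imJ + N₁.imK * N₂.imK := by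
    simp [Quaternion.re_mul, h₁, h₂]
  have hnormsq : Quaternion.normSq (N₁ - N₂) = Quaternion.normSq (N₁ + N₂) := by
    simp only [Quaternion.normSq_def', Quaternion.re_sub, Quaternion.re_add,
      Quaternion.imI_sub, Quaternion.imI_add, Quaternion.imJ_sub, Quaternion.imJ_add,
      Quaternion.imK_sub, Quaternion.imK_add]
    rw [hre] at horth
    nlinarith [horth]
  have hnorm : ‖N₁ - N₂‖ = ‖N₁ + N₂‖ := by
    have := congrArg Real.sqrt hnormsq
    simpa [Quaternion.normSq_eq_norm_mul_self, Real.sqrt_mul_self (norm_nonneg _)] using this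
  refine ⟨?_, hnorm⟩
  rw [Quaternion.exp_of_re_eq_zero _ (by simp [h₁, h₂]),
    Quaternion.exp_of_re_eq_zero _ (by simp [h₁, h₂]), hnorm]
  push_cast
  module
end

section
/- For every nonzero quaternion ζ and every natural number n ≥ 1, there exists a quaternion z with zⁿ = ζ. -/
open Quaternion NormedSpace

/-- The quaternion `i`. -/
def quatI : ℍ[ℝ] := ⟨0, 1, 0, 0⟩

lemma quatI_re : quatI.re = 0 := rfl

lemma norm_quatI : ‖quatI‖ = 1 := by
  have h2 := Quaternion.normSq_eq_norm_mul_self quatI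
  have h1 : Quaternion.normSq quatI = 1 := by
    rw [Quaternion.normSq_def']
    simp [quatI]
  nlinarith [norm_nonneg quatI]

/-- Every nonzero quaternion is an exponential. -/
lemma quaternion_exp_surj (ζ : ℍ[ℝ]) (hζ : ζ ≠ 0) : ∃ q : ℍ[ℝ], exp q = ζ := by
  set r : ℝ := ‖ζ‖ with hr_def
  have hr : 0 < r := norm_pos_iff.mpr hζ
  -- a unit imaginary quaternion in the direction of ζ.im
  obtain ⟨u, hu_re, hu_norm, hζu⟩ :
      ∃ u : ℍ[ℝ], u.re = 0 ∧ ‖u‖ = 1 ∧ ζ = (ζ.re : ℍ[ℝ]) + ‖ζ.im‖ • u := by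
    rcases eq_or_ne ζ.im 0 with h | h
    · refine ⟨quatI, quatI_re, norm_quatI, ?_⟩
      rw [h, norm_zero, zero_smul, add_zero]
      conv_lhs => rw [← Quaternion.re_add_im ζ]
      rw [h, add_zero]
    · refine ⟨‖ζ.im‖⁻¹ • ζ.im, by simp, ?_, ?_⟩
      · rw [norm_smul, norm_inv, norm_norm,
          inv_mul_cancel₀ (norm_ne_zero_iff.mpr h)]
      · rw [smul_smul, mul_inv_cancel₀ (norm_ne_zero_iff.mpr h), one_smul,
          Quaternion.re_add_im]
  -- key norm identity : r ^ 2 = ζ.re ^ 2 + ‖ζ.im‖ ^ 2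
  have hkey : r ^ 2 = ζ.re ^ 2 + ‖ζ.im‖ ^ 2 := by
    have h1 : Quaternion.normSq ζ = ζ.re ^ 2 + Quaternion.normSq ζ.im := by
      simp [Quaternion.normSq_def']
      ring
    have h2 := Quaternion.normSq_eq_norm_mul_self ζ
    have h3 := Quaternion.normSq_eq_norm_mul_self ζ.im
    nlinarith
  have habs : |ζ.re| ≤ r := by
    nlinarith [sq_abs ζ.re, abs_nonneg ζ.re, sq_nonneg ‖ζ.im‖]
  have hle1 : -1 ≤ ζ.re / r := by
    rw [le_div_iff₀ hr]
    nlinarith [abs_le.mp habs]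
  have hle2 : ζ.re / r ≤ 1 := by
    rw [div_le_one hr]
    exact (abs_le.mp habs).2
  set θ : ℝ := Real.arccos (ζ.re / r) with hθ_def
  have hθ0 : 0 ≤ θ := Real.arccos_nonneg _
  have hcos : Real.cos θ = ζ.re / r := Real.cos_arccos hle1 hle2
  have hsin : Real.sin θ = ‖ζ.im‖ / r := by
    rw [hθ_def, Real.sin_arccos]
    have : 1 - (ζ.re / r) ^ 2 = (‖ζ.im‖ / r) ^ 2 := by
      field_simp
      nlinarith
    rw [this, Real.sqrt_sq (by positivity)]
  refine ⟨(Real.log r : ℝ) + θ • u, ?_⟩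
  have hq_re : ((Real.log r : ℝ) + θ • u : ℍ[ℝ]).re = Real.log r := by
    simp [hu_re]
  have hq_im : ((Real.log r : ℝ) + θ • u : ℍ[ℝ]).im = θ • u := by
    have hu_im : u.im = u := by
      conv_rhs => rw [← Quaternion.re_add_im u]
      simp [hu_re]
    simp [Quaternion.im_coe, hu_im]
  rw [Quaternion.exp_eq, hq_re, hq_im]
  have hnorm_im : ‖θ • u‖ = θ := by
    rw [norm_smul, hu_norm, mul_one, Real.norm_eq_abs, abs_of_nonneg hθ0]
  rw [hnorm_im]
  have hexp : exp (Real.log r) = r := by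
    rw [← Real.exp_eq_exp_ℝ]
    exact Real.exp_log hr
  rw [hexp, hcos, hsin]
  have hsmul : (‖ζ.im‖ / r / θ) • (θ • u) = (‖ζ.im‖ / r) • u := by
    rcases eq_or_ne θ 0 with h | h
    · have him : ‖ζ.im‖ = 0 := by
        have hs := hsin
        rw [h, Real.sin_zero] at hs
        field_simp at hs
        simpa using hs.symm
      simp [h, him]
    · rw [smul_smul, div_mul_cancel₀ _ h]
  rw [hsmul, smul_add, ← Quaternion.coe_smul, smul_eq_mul,
    mul_div_cancel₀ _ hr.ne', smul_smul, mul_div_cancel₀ _ hr.ne']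
  exact hζu.symm

theorem quaternion_nth_root_exists (ζ : ℍ[ℝ]) (hζ : ζ ≠ 0) (n : ℕ) (hn : 1 ≤ n) :
    ∃ z : ℍ[ℝ], z ^ n = ζ := by
  obtain ⟨q, hq⟩ := quaternion_exp_surj ζ hζ
  refine ⟨exp ((n : ℝ)⁻¹ • q), ?_⟩
  letI : NormedAlgebra ℚ ℍ[ℝ] := .restrictScalars ℚ ℝ ℍ[ℝ]
  rw [← exp_nsmul, ← Nat.cast_smul_eq_nsmul ℝ n, smul_smul, mul_inv_cancel₀,
    one_smul, hq]
  exact_mod_cast Nat.one_le_iff_ne_zero.mp hn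
end

section
/- Let P : ℍ → ℍ be a nonconstant 'monic one-sided' polynomial of the form P(z) = z^(n+1) + Σ_{k=0}^{n} a_k * z^k with coefficients a_k ∈ ℍ. Then there exists z₀ ∈ ℍ with P(z₀) = 0. -/
open Quaternion Polynomial Finset
noncomputable def ι : ℂ →+* ℍ[ℝ] where
  toFun z := ⟨z.re, z.im, 0, 0⟩
  map_one' := by ext <;> simp
  map_mul' z w := by
    show (⟨(z * w).re, (z * w).im, 0, 0⟩ : ℍ[ℝ]) = ⟨z.re, z.im, 0, 0⟩ * ⟨w.re, w.im, 0, 0⟩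
    ext <;> simp [Complex.mul_re, Complex.mul_im] <;> ring
  map_zero' := by ext <;> simp
  map_add' z w := by
    show (⟨(z + w).re, (z + w).im, 0, 0⟩ : ℍ[ℝ]) = ⟨z.re, z.im, 0, 0⟩ + ⟨w.re, w.im, 0, 0⟩
    ext <;> simp

noncomputable def jq : ℍ[ℝ] := ⟨0, 0, 1, 0⟩

lemma ι_re (z : ℂ) : (ι z).re = z.re := rfl
lemma ι_imI (z : ℂ) : (ι z).imI = z.im := rfl
lemma ι_imJ (z : ℂ) : (ι z).imJ = 0 := rfl
lemma ι_imK (z : ℂ) : (ι z).imK = 0 := rfl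
lemma jq_re : jq.re = 0 := rfl
lemma jq_imI : jq.imI = 0 := rfl
lemma jq_imJ : jq.imJ = 1 := rfl
lemma jq_imK : jq.imK = 0 := rfl

lemma term_eq (x y u w e : ℂ) :
    (ι x + ι y * jq) * (ι u - ι w * jq) * ι e
      = ι ((x * u + y * (starRingEnd ℂ w)) * e)
        + ι ((y * (starRingEnd ℂ u) - x * w) * (starRingEnd ℂ e)) * jq := by
  ext <;> simp [ι_re, ι_imI, ι_imJ, ι_imK, jq_re, jq_imI, jq_imJ, jq_imK, Complex.mul_re, Complex.mul_im] <;> ring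

lemma csum (N : ℕ) (u v : ℕ → ℂ) (z : ℂ) :
    ∑ i ∈ range N, ∑ j ∈ range N, u i * v j * z ^ (i + j)
      = (∑ i ∈ range N, u i * z ^ i) * (∑ j ∈ range N, v j * z ^ j) := by
  rw [Finset.sum_mul_sum]
  exact Finset.sum_congr rfl fun i _ => Finset.sum_congr rfl fun j _ => by rw [pow_add]; ring

lemma key_sum (N : ℕ) (A B : ℕ → ℂ) (z : ℂ) :
    ∑ i ∈ range N, ∑ j ∈ range N,
      (ι (A i) + ι (B i) * jq) * (ι (starRingEnd ℂ (A j)) - ι (B j) * jq) * ι z ^ (i + j)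
    = ι ((∑ k ∈ range N, A k * z ^ k) * (∑ k ∈ range N, starRingEnd ℂ (A k) * z ^ k)
        + (∑ k ∈ range N, B k * z ^ k) * (∑ k ∈ range N, starRingEnd ℂ (B k) * z ^ k)) := by
  have h1 : ∀ i ∈ range N, ∀ j ∈ range N,
      (ι (A i) + ι (B i) * jq) * (ι (starRingEnd ℂ (A j)) - ι (B j) * jq) * ι z ^ (i + j)
      = ι ((A i * starRingEnd ℂ (A j) + B i * starRingEnd ℂ (B j)) * z ^ (i + j))
        + ι ((B i * A j - A i * B j) * (starRingEnd ℂ z) ^ (i + j)) * jq := by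
    intro i _ j _
    rw [← map_pow, term_eq]
    simp [map_pow]
  have hmain : ∑ i ∈ range N, ∑ j ∈ range N,
      (A i * starRingEnd ℂ (A j) + B i * starRingEnd ℂ (B j)) * z ^ (i + j)
      = (∑ k ∈ range N, A k * z ^ k) * (∑ k ∈ range N, starRingEnd ℂ (A k) * z ^ k)
        + (∑ k ∈ range N, B k * z ^ k) * (∑ k ∈ range N, starRingEnd ℂ (B k) * z ^ k) := by
    simp only [add_mul, Finset.sum_add_distrib, csum]
  have hzero : ∑ i ∈ range N, ∑ j ∈ range N,
      (B i * A j - A i * B j) * (starRingEnd ℂ z) ^ (i + j) = 0 := by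
    simp only [sub_mul, Finset.sum_sub_distrib, csum]
    ring
  calc ∑ i ∈ range N, ∑ j ∈ range N,
      (ι (A i) + ι (B i) * jq) * (ι (starRingEnd ℂ (A j)) - ι (B j) * jq) * ι z ^ (i + j)
      = ∑ i ∈ range N, ∑ j ∈ range N,
        (ι ((A i * starRingEnd ℂ (A j) + B i * starRingEnd ℂ (B j)) * z ^ (i + j))
        + ι ((B i * A j - A i * B j) * (starRingEnd ℂ z) ^ (i + j)) * jq) := by
        exact Finset.sum_congr rfl fun i hi => Finset.sum_congr rfl fun j hj => h1 i hi j hj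
    _ = ι (∑ i ∈ range N, ∑ j ∈ range N,
          (A i * starRingEnd ℂ (A j) + B i * starRingEnd ℂ (B j)) * z ^ (i + j))
        + ι (∑ i ∈ range N, ∑ j ∈ range N,
          (B i * A j - A i * B j) * (starRingEnd ℂ z) ^ (i + j)) * jq := by
        simp only [Finset.sum_add_distrib, ← Finset.sum_mul, ← map_sum]
    _ = _ := by rw [hmain, hzero]; simp

lemma mul_iota (x y e : ℂ) :
    (ι x + ι y * jq) * ι e = ι (x * e) + ι (y * starRingEnd ℂ e) * jq := by
  ext <;> simp [ι_re, ι_imI, ι_imJ, ι_imK, jq_re, jq_imI, jq_imJ, jq_imK, Complex.mul_re, Complex.mul_im]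

lemma mul_iota' (x y e : ℂ) :
    (ι x - ι y * jq) * ι e = ι (x * e) - ι (y * starRingEnd ℂ e) * jq := by
  ext <;> simp [ι_re, ι_imI, ι_imJ, ι_imK, jq_re, jq_imI, jq_imJ, jq_imK, Complex.mul_re, Complex.mul_im] <;> ring

lemma zero_iff (x y : ℂ) : ι x + ι y * jq = 0 ↔ x = 0 ∧ y = 0 := by
  constructor
  · intro h
    have h1 := congrArg QuaternionAlgebra.re h
    have h2 := congrArg QuaternionAlgebra.imI h
    have h3 := congrArg QuaternionAlgebra.imJ h
    have h4 := congrArg QuaternionAlgebra.imK h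
    simp [ι_re, ι_imI, ι_imJ, ι_imK, jq_re, jq_imI, jq_imJ, jq_imK] at h1 h2 h3 h4
    exact ⟨Complex.ext h1 h2, Complex.ext h3 h4⟩
  · rintro ⟨rfl, rfl⟩; simp

lemma zero_iff' (x y : ℂ) : ι x - ι y * jq = 0 ↔ x = 0 ∧ y = 0 := by
  have : ι x - ι y * jq = ι x + ι (-y) * jq := by simp [sub_eq_add_neg]
  rw [this, zero_iff, neg_eq_zero]

lemma conjpow (v q : ℍ[ℝ]) (hv : v ≠ 0) (i : ℕ) : (v * q * v⁻¹) ^ i * v = v * q ^ i := by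
  induction i with
  | zero => simp
  | succ i ih =>
      calc (v * q * v⁻¹) ^ (i + 1) * v = (v * q * v⁻¹) ^ i * ((v * q * v⁻¹) * v) := by
            rw [pow_succ, mul_assoc]
        _ = (v * q * v⁻¹) ^ i * (v * q) := by rw [mul_assoc (v * q), inv_mul_cancel₀ hv, mul_one]
        _ = ((v * q * v⁻¹) ^ i * v) * q := by rw [← mul_assoc]
        _ = (v * q ^ i) * q := by rw [ih]
        _ = v * q ^ (i + 1) := by rw [mul_assoc, ← pow_succ]

lemma fz_eq (N : ℕ) (A B : ℕ → ℂ) (z : ℂ) :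
    ∑ k ∈ Finset.range N, (ι (A k) + ι (B k) * jq) * (ι z) ^ k
      = ι (∑ k ∈ Finset.range N, A k * z ^ k)
        + ι (∑ k ∈ Finset.range N, B k * (starRingEnd ℂ z) ^ k) * jq := by
  have : ∀ k, (ι (A k) + ι (B k) * jq) * (ι z) ^ k
      = ι (A k * z ^ k) + ι (B k * (starRingEnd ℂ z) ^ k) * jq := by
    intro k; rw [← map_pow, mul_iota]; simp [map_pow]
  simp only [this, Finset.sum_add_distrib, ← Finset.sum_mul, ← map_sum]

lemma vz_eq (N : ℕ) (A B : ℕ → ℂ) (z : ℂ) :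
    ∑ k ∈ Finset.range N, (ι (starRingEnd ℂ (A k)) - ι (B k) * jq) * (ι z) ^ k
      = ι (∑ k ∈ Finset.range N, starRingEnd ℂ (A k) * z ^ k)
        - ι (∑ k ∈ Finset.range N, B k * (starRingEnd ℂ z) ^ k) * jq := by
  have : ∀ k, (ι (starRingEnd ℂ (A k)) - ι (B k) * jq) * (ι z) ^ k
      = ι (starRingEnd ℂ (A k) * z ^ k) + (- ι (B k * (starRingEnd ℂ z) ^ k)) * jq := by
    intro k; rw [← map_pow, mul_iota']; simp [map_pow, sub_eq_add_neg]
  simp only [this, Finset.sum_add_distrib, ← Finset.sum_mul, ← map_sum, Finset.sum_neg_distrib]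
  simp [sub_eq_add_neg]

lemma decompose (q : ℍ[ℝ]) : q = ι ⟨q.re, q.imI⟩ + ι ⟨q.imJ, q.imK⟩ * jq := by
  ext <;> simp [ι_re, ι_imI, ι_imJ, ι_imK, jq_re, jq_imI, jq_imJ, jq_imK]

lemma deg_aux (m : ℕ) (f : ℕ → ℂ) :
    (∑ i : Fin (m + 1), Polynomial.C (f i) * Polynomial.X ^ (i : ℕ)).degree ≤ (m : WithBot ℕ) := by
  apply (Polynomial.degree_sum_le _ _).trans
  apply Finset.sup_le
  intro i _
  exact (Polynomial.degree_C_mul_X_pow_le _ _).trans (by exact_mod_cast Nat.le_of_lt_succ i.2)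

theorem quaternion_monic_polynomial_has_zero (n : ℕ) (a : ℕ → ℍ[ℝ]) :
    ∃ z₀ : ℍ[ℝ], z₀ ^ (n + 1) + ∑ k ∈ Finset.range (n + 1), a k * z₀ ^ k = 0 := by
  classical
  set N := n + 2 with hN
  set A : ℕ → ℂ := fun k => if k = n + 1 then 1 else ⟨(a k).re, (a k).imI⟩ with hA
  set B : ℕ → ℂ := fun k => if k = n + 1 then 0 else ⟨(a k).imJ, (a k).imK⟩ with hB
  set c : ℕ → ℍ[ℝ] := fun k => ι (A k) + ι (B k) * jq with hc
  set d : ℕ → ℍ[ℝ] := fun k => ι (starRingEnd ℂ (A k)) - ι (B k) * jq with hd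
  -- reduction of the goal
  have hgoal : ∀ p : ℍ[ℝ], (∑ k ∈ Finset.range N, c k * p ^ k) = 0 →
      p ^ (n + 1) + ∑ k ∈ Finset.range (n + 1), a k * p ^ k = 0 := by
    intro p hp0
    rw [hN, Finset.sum_range_succ] at hp0
    have hcn : c (n + 1) = 1 := by simp [hc, hA, hB]
    have hck : ∀ k ∈ Finset.range (n + 1), c k * p ^ k = a k * p ^ k := by
      intro k hk
      have hk' : k ≠ n + 1 := by have := Finset.mem_range.1 hk; omega
      have hak : a k = ι (A k) + ι (B k) * jq := by
        rw [hc] at *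
        simp only [hA, hB, if_neg hk']
        exact decompose (a k)
      simp only [hc]
      rw [← hak]
    rw [Finset.sum_congr rfl hck, hcn, one_mul, add_comm] at hp0
    exact hp0
  -- the complex polynomial
  set Fp : Polynomial ℂ :=
    Polynomial.X ^ (n + 1) + ∑ i : Fin (n + 1), Polynomial.C (A i) * Polynomial.X ^ (i : ℕ)
    with hFp
  set Fsp : Polynomial ℂ := Polynomial.X ^ (n + 1)
      + ∑ i : Fin (n + 1), Polynomial.C (starRingEnd ℂ (A i)) * Polynomial.X ^ (i : ℕ) with hFsp
  set Gp : Polynomial ℂ := ∑ i : Fin (n + 1), Polynomial.C (B i) * Polynomial.X ^ (i : ℕ) with hGp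
  set Gsp : Polynomial ℂ :=
    ∑ i : Fin (n + 1), Polynomial.C (starRingEnd ℂ (B i)) * Polynomial.X ^ (i : ℕ) with hGsp
  set hp : Polynomial ℂ := Fp * Fsp + Gp * Gsp with hhp
  -- degrees
  have hdX : (Polynomial.X ^ (n + 1) : Polynomial ℂ).degree = ((n + 1 : ℕ) : WithBot ℕ) :=
    Polynomial.degree_X_pow _
  have hdF : Fp.degree = ((n + 1 : ℕ) : WithBot ℕ) := by
    rw [hFp, Polynomial.degree_add_eq_left_of_degree_lt, hdX]
    rw [hdX]; exact Polynomial.degree_sum_fin_lt _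
  have hdFs : Fsp.degree = ((n + 1 : ℕ) : WithBot ℕ) := by
    rw [hFsp, Polynomial.degree_add_eq_left_of_degree_lt, hdX]
    rw [hdX]; exact Polynomial.degree_sum_fin_lt _
  have hlt : (Gp * Gsp).degree < (Fp * Fsp).degree := by
    have h1 : (Gp * Gsp).degree ≤ ((n : WithBot ℕ) + n) :=
      (Polynomial.degree_mul_le _ _).trans (add_le_add (deg_aux n B) (deg_aux n fun k => starRingEnd ℂ (B k)))
    have h2 : (Fp * Fsp).degree = ((n + 1 : ℕ) : WithBot ℕ) + ((n + 1 : ℕ) : WithBot ℕ) := by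
      rw [Polynomial.degree_mul, hdF, hdFs]
    rw [h2]
    refine h1.trans_lt ?_
    exact_mod_cast by omega
  have hpos : 0 < hp.degree := by
    rw [hhp, Polynomial.degree_add_eq_left_of_degree_lt hlt, Polynomial.degree_mul, hdF, hdFs]
    exact_mod_cast by omega
  obtain ⟨z₀, hz₀⟩ := Complex.exists_root hpos
  have hz₀' : hp.eval z₀ = 0 := hz₀
  -- evaluation of the pieces
  have hA1 : A (n + 1) = 1 := by rw [hA]; simp
  have hB1 : B (n + 1) = 0 := by rw [hB]; simp
  have hFe : ∀ z : ℂ, Fp.eval z = ∑ k ∈ Finset.range N, A k * z ^ k := by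
    intro z
    rw [hN, Finset.sum_range_succ, hA1, one_mul, hFp]
    simp only [Polynomial.eval_add, Polynomial.eval_pow, Polynomial.eval_X,
      Polynomial.eval_finset_sum, Polynomial.eval_mul, Polynomial.eval_C,
      ]
    rw [Fin.sum_univ_eq_sum_range (fun k => A k * z ^ k) (n + 1)]
    ring
  have hFse : ∀ z : ℂ, Fsp.eval z = ∑ k ∈ Finset.range N, starRingEnd ℂ (A k) * z ^ k := by
    intro z
    rw [hN, Finset.sum_range_succ, hA1, map_one, one_mul, hFsp]
    simp only [Polynomial.eval_add, Polynomial.eval_pow, Polynomial.eval_X,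
      Polynomial.eval_finset_sum, Polynomial.eval_mul, Polynomial.eval_C,
      ]
    rw [Fin.sum_univ_eq_sum_range (fun k => starRingEnd ℂ (A k) * z ^ k) (n + 1)]
    ring
  have hGe : ∀ z : ℂ, Gp.eval z = ∑ k ∈ Finset.range N, B k * z ^ k := by
    intro z
    rw [hN, Finset.sum_range_succ, hB1, zero_mul, add_zero, hGp]
    simp only [Polynomial.eval_finset_sum, Polynomial.eval_mul, Polynomial.eval_C,
      Polynomial.eval_pow, Polynomial.eval_X]
    exact Fin.sum_univ_eq_sum_range (fun k => B k * z ^ k) (n + 1)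
  have hGse : ∀ z : ℂ, Gsp.eval z = ∑ k ∈ Finset.range N, starRingEnd ℂ (B k) * z ^ k := by
    intro z
    rw [hN, Finset.sum_range_succ, hB1, map_zero, zero_mul, add_zero, hGsp]
    simp only [Polynomial.eval_finset_sum, Polynomial.eval_mul, Polynomial.eval_C,
      Polynomial.eval_pow, Polynomial.eval_X]
    exact Fin.sum_univ_eq_sum_range (fun k => starRingEnd ℂ (B k) * z ^ k) (n + 1)
  have hEval : ∀ z : ℂ, hp.eval z
      = (∑ k ∈ Finset.range N, A k * z ^ k)
          * (∑ k ∈ Finset.range N, starRingEnd ℂ (A k) * z ^ k)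
        + (∑ k ∈ Finset.range N, B k * z ^ k)
          * (∑ k ∈ Finset.range N, starRingEnd ℂ (B k) * z ^ k) := by
    intro z
    rw [hhp]
    simp only [Polynomial.eval_add, Polynomial.eval_mul, hFe, hFse, hGe, hGse]
  -- the conjugate is also a root
  have h0 : (∑ k ∈ Finset.range N, A k * z₀ ^ k)
          * (∑ k ∈ Finset.range N, starRingEnd ℂ (A k) * z₀ ^ k)
        + (∑ k ∈ Finset.range N, B k * z₀ ^ k)
          * (∑ k ∈ Finset.range N, starRingEnd ℂ (B k) * z₀ ^ k) = 0 := by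
    rw [← hEval]; exact hz₀'
  have hconjroot : hp.eval (starRingEnd ℂ z₀) = 0 := by
    rw [hEval]
    have := congrArg (starRingEnd ℂ) h0
    simp only [map_add, map_mul, map_sum, map_pow, map_zero, Complex.conj_conj] at this
    rw [← this]; ring
  -- key step
  have hkey : ∀ z : ℂ, hp.eval z = 0 →
      (∑ j ∈ Finset.range N, d j * (ι z) ^ j) ≠ 0 →
      ∃ p : ℍ[ℝ], ∑ k ∈ Finset.range N, c k * p ^ k = 0 := by
    intro z hz hv
    refine ⟨(∑ j ∈ Finset.range N, d j * (ι z) ^ j) * ι z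
      * (∑ j ∈ Finset.range N, d j * (ι z) ^ j)⁻¹, ?_⟩
    set v : ℍ[ℝ] := ∑ j ∈ Finset.range N, d j * (ι z) ^ j with hvdef
    have hmul : (∑ k ∈ Finset.range N, c k * (v * ι z * v⁻¹) ^ k) * v = 0 := by
      rw [Finset.sum_mul]
      have step1 : ∀ k, c k * (v * ι z * v⁻¹) ^ k * v = c k * v * (ι z) ^ k := fun k => by
        rw [mul_assoc, conjpow _ _ hv, ← mul_assoc]
      have step2 : ∀ i, c i * v * (ι z) ^ i
          = ∑ j ∈ Finset.range N, (c i * d j) * (ι z) ^ (i + j) := by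
        intro i
        rw [hvdef, Finset.mul_sum, Finset.sum_mul]
        refine Finset.sum_congr rfl fun j _ => ?_
        rw [← mul_assoc, mul_assoc (c i * d j), ← pow_add, add_comm j i]
      calc (∑ k ∈ Finset.range N, c k * (v * ι z * v⁻¹) ^ k * v)
          = ∑ k ∈ Finset.range N, c k * v * (ι z) ^ k :=
            Finset.sum_congr rfl fun k _ => step1 k
        _ = ∑ i ∈ Finset.range N, ∑ j ∈ Finset.range N, (c i * d j) * (ι z) ^ (i + j) :=
            Finset.sum_congr rfl fun i _ => step2 i
        _ = ι ((∑ k ∈ Finset.range N, A k * z ^ k)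
              * (∑ k ∈ Finset.range N, starRingEnd ℂ (A k) * z ^ k)
            + (∑ k ∈ Finset.range N, B k * z ^ k)
              * (∑ k ∈ Finset.range N, starRingEnd ℂ (B k) * z ^ k)) := by
            simp only [hc, hd]
            exact key_sum N A B z
        _ = 0 := by rw [← hEval, hz, map_zero]
    exact (mul_eq_zero.mp hmul).resolve_right hv
  by_cases h1 : (∑ j ∈ Finset.range N, d j * (ι z₀) ^ j) = 0
  · by_cases h2 : (∑ j ∈ Finset.range N, d j * (ι (starRingEnd ℂ z₀)) ^ j) = 0
    · -- degenerate case: explicit complex root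
      simp only [hd] at h1 h2
      rw [vz_eq] at h1 h2
      obtain ⟨hFse0, hGe0⟩ := (zero_iff' _ _).mp h1
      obtain ⟨hFse0', hGe0'⟩ := (zero_iff' _ _).mp h2
      simp only [Complex.conj_conj] at hGe0'
      refine ⟨ι (starRingEnd ℂ z₀), hgoal _ ?_⟩
      simp only [hc]
      rw [fz_eq]
      have hA0 : (∑ k ∈ Finset.range N, A k * (starRingEnd ℂ z₀) ^ k) = 0 := by
        have := congrArg (starRingEnd ℂ) hFse0
        simpa [map_sum, map_mul, map_pow] using this
      rw [hA0]
      simp only [Complex.conj_conj]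
      rw [hGe0']
      simp
    · obtain ⟨p, hp'⟩ := hkey _ hconjroot h2
      exact ⟨p, hgoal p hp'⟩
  · obtain ⟨p, hp'⟩ := hkey z₀ hz₀' h1
    exact ⟨p, hgoal p hp'⟩
end
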